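/- Let k be an algebraically closed field of characteristic p > 0, n ≥ 1, and let W_n(k(x)) be the ring of length-n truncated Witt vectors over k(x), with ℘ := F − id : W_n(k(x)) → W_n(k(x)) the Artin–Schreier–Witt isogeny (Frobenius minus identity). Call a Witt vector (f^1, …, f^n) ∈ W_n(k(x)) reduced if each component f^i is a finite k-linear combination of functions (x − a)^{−j} with a ∈ k and j a positive integer prime to p, and of monomials x^j with j a positive integer prime to p. Then every G ∈ W_n(k(x)) is congruent modulo ℘(W_n(k(x))) to a reduced Witt vector, and this reduced representative is unique: if F' and F'' are both reduced and F' − F'' ∈ ℘(W_n(k(x))), then F' = F''. -/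

import Mathlib

set_option linter.unusedSectionVars false
set_option maxHeartbeats 1000000


/-- A rational function `f ∈ k(x)` is *reduced* if it is a finite `k`-linear combination
of functions `(x − a)^{−j}` (`a ∈ k`, `j ≥ 1`, `p ∤ j`) and of monomials `x^j`
(`j ≥ 1`, `p ∤ j`); i.e. its partial fraction decomposition consists only of
prime-to-`p`-degree terms. -/
def IsReducedRatFunc (p : ℕ) (k : Type) [Field k] (f : RatFunc k) : Prop :=
  f ∈ Submodule.span k
    ({g : RatFunc k | ∃ (a : k) (j : ℕ), 0 < j ∧ ¬ p ∣ j ∧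
        g = ((RatFunc.X - RatFunc.C a) ^ j)⁻¹} ∪
      {g : RatFunc k | ∃ j : ℕ, 0 < j ∧ ¬ p ∣ j ∧ g = RatFunc.X ^ j})

/-- The Artin–Schreier–Witt isogeny `℘ = F − id` on length-`n` truncated Witt vectors
over a ring of characteristic `p`; here the Witt vector Frobenius `F` acts
coefficientwise by `y ↦ y^p` (as it does over any ring of characteristic `p`). -/
noncomputable def aswIsogeny (p n : ℕ) [Fact p.Prime] (k : Type) [Field k]
    (B : TruncatedWittVector p n (RatFunc k)) : TruncatedWittVector p n (RatFunc k) :=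
  TruncatedWittVector.mk p (fun i => (TruncatedWittVector.coeff i B) ^ p) - B

namespace ReducedWitt

open Polynomial

variable {p : ℕ} [hp : Fact p.Prime] {k : Type} [Field k]

theorem red_iff (f : RatFunc k) : IsReducedRatFunc p k f ↔
    f ∈ Submodule.span k
    ({g : RatFunc k | ∃ (a : k) (j : ℕ), 0 < j ∧ ¬ p ∣ j ∧
        g = ((RatFunc.X - RatFunc.C a) ^ j)⁻¹} ∪
      {g : RatFunc k | ∃ j : ℕ, 0 < j ∧ ¬ p ∣ j ∧ g = RatFunc.X ^ j}) := Iff.rfl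

theorem charP_ratFunc [CharP k p] : CharP (RatFunc k) p :=
  charP_of_injective_algebraMap (algebraMap k (RatFunc k)).injective p

/-! ### Laurent series embeddings -/


theorem algMapLS (c : k) : algebraMap k (LaurentSeries k) c = HahnSeries.C c := by
  rw [HahnSeries.algebraMap_apply', PowerSeries.algebraMap_apply]
  simp [HahnSeries.ofPowerSeries_C]

theorem algMapLS2 (c : k) : algebraMap k (LaurentSeries k) c = HahnSeries.single (0:ℤ) c := by
  rw [algMapLS]; rfl

noncomputable def T1 (k : Type) [Field k] : LaurentSeries k := HahnSeries.single (1 : ℤ) (1 : k)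

noncomputable def Tm1 (k : Type) [Field k] : LaurentSeries k := HahnSeries.single (-1 : ℤ) (1 : k)

theorem aeval_T1_coeff (Q : k[X]) (z : ℤ) :
    (Polynomial.aeval (T1 k) Q).coeff z = if 0 ≤ z then Q.coeff z.natAbs else 0 := by
  induction Q using Polynomial.induction_on' with
  | add f g hf hg =>
    rw [map_add, HahnSeries.coeff_add, hf, hg, Polynomial.coeff_add]
    split <;> simp
  | monomial n c =>
    rw [Polynomial.aeval_monomial, T1, HahnSeries.single_pow]
    rw [algMapLS2, HahnSeries.single_mul_single]
    simp only [zero_add, one_pow, mul_one, nsmul_eq_mul]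
    by_cases hz : z = (n : ℤ)
    · subst hz
      rw [HahnSeries.coeff_single_same, Polynomial.coeff_monomial]
      simp
    · rw [HahnSeries.coeff_single_of_ne (by omega), Polynomial.coeff_monomial]
      split_ifs with h1 h2
      · exfalso; omega
      · rfl
      · rfl

theorem aeval_Tm1_coeff (Q : k[X]) (z : ℤ) :
    (Polynomial.aeval (Tm1 k) Q).coeff z = if z ≤ 0 then Q.coeff z.natAbs else 0 := by
  induction Q using Polynomial.induction_on' with
  | add f g hf hg =>
    rw [map_add, HahnSeries.coeff_add, hf, hg, Polynomial.coeff_add]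
    split <;> simp
  | monomial n c =>
    rw [Polynomial.aeval_monomial, Tm1, HahnSeries.single_pow]
    rw [algMapLS2, HahnSeries.single_mul_single]
    simp only [zero_add, one_pow, mul_one, nsmul_eq_mul]
    have hidx : (n : ℤ) * (-1) = -(n : ℤ) := by ring
    rw [hidx]
    by_cases hz : z = -(n : ℤ)
    · subst hz
      rw [HahnSeries.coeff_single_same, Polynomial.coeff_monomial]
      simp
    · rw [HahnSeries.coeff_single_of_ne (by omega), Polynomial.coeff_monomial]
      split_ifs with h1 h2
      · exfalso; omega
      · rfl
      · rfl

theorem aeval_T1_injective :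
    Function.Injective (fun Q : k[X] => Polynomial.aeval (T1 k) Q) := by
  intro f g h
  apply Polynomial.ext
  intro i
  have := congrArg (fun s : LaurentSeries k => s.coeff (i : ℤ)) h
  simpa [aeval_T1_coeff] using this

theorem aeval_Tm1_injective :
    Function.Injective (fun Q : k[X] => Polynomial.aeval (Tm1 k) Q) := by
  intro f g h
  apply Polynomial.ext
  intro i
  have := congrArg (fun s : LaurentSeries k => s.coeff (-(i : ℤ))) h
  simpa [aeval_Tm1_coeff] using this

noncomputable def eaPoly (a : k) : k[X] →+* LaurentSeries k :=
  (Polynomial.aeval (T1 k + HahnSeries.C a)).toRingHom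

theorem eaPoly_apply (a : k) (Q : k[X]) :
    eaPoly a Q = Polynomial.aeval (T1 k) (Polynomial.taylor a Q) := by
  rw [Polynomial.taylor_apply, Polynomial.aeval_comp]
  simp [eaPoly, algMapLS]

theorem eaPoly_injective (a : k) : Function.Injective (eaPoly a) := by
  intro f g h
  rw [eaPoly_apply, eaPoly_apply] at h
  exact Polynomial.taylor_injective a (aeval_T1_injective h)

noncomputable def einfPoly (k : Type) [Field k] : k[X] →+* LaurentSeries k :=
  (Polynomial.aeval (Tm1 k)).toRingHom

theorem einfPoly_injective : Function.Injective (einfPoly k) :=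
  aeval_Tm1_injective

noncomputable def ea (a : k) : RatFunc k →+* LaurentSeries k :=
  IsFractionRing.lift (eaPoly_injective a)

noncomputable def einf (k : Type) [Field k] : RatFunc k →+* LaurentSeries k :=
  IsFractionRing.lift (einfPoly_injective (k := k))

theorem ea_algebraMap (a : k) (Q : k[X]) :
    ea a (algebraMap k[X] (RatFunc k) Q) = eaPoly a Q :=
  IsFractionRing.lift_algebraMap _ _

theorem einf_algebraMap (Q : k[X]) :
    einf k (algebraMap k[X] (RatFunc k) Q) = einfPoly k Q :=
  IsFractionRing.lift_algebraMap _ _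

theorem ea_C (a c : k) : ea a (RatFunc.C c) = HahnSeries.C c := by
  rw [← RatFunc.algebraMap_C, ea_algebraMap, eaPoly_apply, Polynomial.taylor_C]
  rw [Polynomial.aeval_C, algMapLS]

theorem einf_C (c : k) : einf k (RatFunc.C c) = HahnSeries.C c := by
  rw [← RatFunc.algebraMap_C, einf_algebraMap, einfPoly]
  simp only [AlgHom.toRingHom_eq_coe, RingHom.coe_coe, Polynomial.aeval_C]
  rw [algMapLS]

theorem ea_smul (a c : k) (f : RatFunc k) : ea a (c • f) = c • ea a f := by
  rw [Algebra.smul_def, map_mul, RatFunc.algebraMap_eq_C, ea_C, HahnSeries.C_mul_eq_smul]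

theorem einf_smul (c : k) (f : RatFunc k) : einf k (c • f) = c • einf k f := by
  rw [Algebra.smul_def, map_mul, RatFunc.algebraMap_eq_C, einf_C, HahnSeries.C_mul_eq_smul]

/-! ### order facts -/

theorem order_ge {x : LaurentSeries k} (hx : x ≠ 0) (d : ℤ) (h : ∀ z < d, x.coeff z = 0) :
    d ≤ x.order := by
  by_contra hlt
  push_neg at hlt
  exact HahnSeries.coeff_order_eq_zero.not.mpr hx (h _ hlt)

theorem pow_coeff_order {x : LaurentSeries k} (hx : x ≠ 0) (n : ℕ) :
    (x ^ n).coeff (n • x.order) = x.leadingCoeff ^ n := by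
  induction n with
  | zero => simp [HahnSeries.coeff_one]
  | succ n ih =>
    rw [pow_succ, succ_nsmul]
    have hxo : (x ^ n).order = n • x.order := HahnSeries.order_pow x n
    have hmul := HahnSeries.coeff_mul_order_add_order (x ^ n) x
    rw [hxo] at hmul
    rw [hmul]
    have hlc : (x ^ n).leadingCoeff = x.leadingCoeff ^ n := by
      rw [HahnSeries.leadingCoeff_eq, hxo, ih]
    rw [hlc, HahnSeries.leadingCoeff_eq, pow_succ]

/-! ### values on generators -/

theorem ea_X_sub_C (a a' : k) :
    ea a (RatFunc.X - RatFunc.C a') = T1 k + HahnSeries.C (a - a') := by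
  rw [← RatFunc.algebraMap_X, ← RatFunc.algebraMap_C, ← map_sub, ea_algebraMap, eaPoly]
  simp only [AlgHom.toRingHom_eq_coe, RingHom.coe_coe, map_sub, Polynomial.aeval_X,
    Polynomial.aeval_C, algMapLS]
  ring

theorem ea_X (a : k) : ea a RatFunc.X = T1 k + HahnSeries.C a := by
  rw [← RatFunc.algebraMap_X, ea_algebraMap, eaPoly]
  simp only [AlgHom.toRingHom_eq_coe, RingHom.coe_coe, Polynomial.aeval_X]

theorem einf_X : einf k RatFunc.X = Tm1 k := by
  rw [← RatFunc.algebraMap_X, einf_algebraMap, einfPoly]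
  simp only [AlgHom.toRingHom_eq_coe, RingHom.coe_coe, Polynomial.aeval_X]

theorem einf_X_sub_C (a' : k) :
    einf k (RatFunc.X - RatFunc.C a') = Tm1 k - HahnSeries.C a' := by
  rw [map_sub, einf_X, einf_C]

theorem base_ea_ne (c : k) : (T1 k + HahnSeries.C c) ≠ 0 := by
  intro h
  have h1 : (T1 k + HahnSeries.C c).coeff 1 = 1 := by
    rw [HahnSeries.coeff_add, T1, HahnSeries.coeff_single_same, HahnSeries.C_apply,
      HahnSeries.coeff_single_of_ne (by norm_num)]
    simp
  rw [h] at h1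
  simp at h1

theorem base_ea_order_nonneg (c : k) : (0:ℤ) ≤ (T1 k + HahnSeries.C c).order := by
  apply order_ge (base_ea_ne c) 0
  intro z hz
  rw [HahnSeries.coeff_add, T1, HahnSeries.coeff_single_of_ne (by omega), HahnSeries.C_apply,
    HahnSeries.coeff_single_of_ne (by omega)]
  simp

theorem base_ea_order_zero {c : k} (hc : c ≠ 0) : (T1 k + HahnSeries.C c).order = 0 := by
  apply le_antisymm
  · apply HahnSeries.order_le_of_coeff_ne_zero
    rw [HahnSeries.coeff_add, T1, HahnSeries.coeff_single_of_ne (by norm_num), HahnSeries.C_apply,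
      HahnSeries.coeff_single_same]
    simpa using hc
  · exact base_ea_order_nonneg c

theorem ea_coeff_pole_zero (a a' : k) (j : ℕ) (hj : 0 < j) (hpj : ¬ p ∣ j)
    (z : ℤ) (hz : z < 0) (hdvd : (p:ℤ) ∣ z) :
    (ea a (((RatFunc.X - RatFunc.C a') ^ j)⁻¹)).coeff z = 0 := by
  rw [map_inv₀, map_pow, ea_X_sub_C]
  by_cases ha : a' = a
  · have hstep : T1 k + HahnSeries.C (a - a') = T1 k := by
      rw [ha, sub_self, map_zero, add_zero]
    rw [hstep, T1, HahnSeries.single_pow]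
    have hinv : ((HahnSeries.single ((j : ℕ) • (1:ℤ))) ((1:k) ^ j))⁻¹
        = HahnSeries.single (-(j:ℤ)) 1 := by
      apply inv_eq_of_mul_eq_one_right
      rw [HahnSeries.single_mul_single]
      have : (j : ℕ) • (1:ℤ) + -(j:ℤ) = 0 := by simp
      rw [this]
      simp
    rw [hinv]
    apply HahnSeries.coeff_single_of_ne
    intro hzj
    apply hpj
    have : (p:ℤ) ∣ (j:ℤ) := by
      rw [← Int.dvd_neg, ← hzj]
      exact hdvd
    exact_mod_cast this
  · have hc : a - a' ≠ 0 := sub_ne_zero.mpr (fun h => ha h.symm)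
    have hun : (T1 k + HahnSeries.C (a - a')) ≠ 0 := base_ea_ne _
    have hupow : (T1 k + HahnSeries.C (a - a')) ^ j ≠ 0 := pow_ne_zero _ hun
    have hordpow : ((T1 k + HahnSeries.C (a - a')) ^ j).order = 0 := by
      rw [HahnSeries.order_pow, base_ea_order_zero hc, smul_zero]
    have hinvord : (((T1 k + HahnSeries.C (a - a')) ^ j)⁻¹).order = 0 := by
      have h1 := HahnSeries.order_mul (inv_ne_zero hupow) hupow
      rw [inv_mul_cancel₀ hupow, HahnSeries.order_one, hordpow, add_zero] at h1
      exact h1.symm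
    apply HahnSeries.coeff_eq_zero_of_lt_order
    rw [hinvord]
    exact hz

theorem ea_coeff_mon_zero (a : k) (j : ℕ) (z : ℤ) (hz : z < 0) :
    (ea a (RatFunc.X ^ j)).coeff z = 0 := by
  rw [map_pow, ea_X]
  apply HahnSeries.coeff_eq_zero_of_lt_order
  have h1 : (0:ℤ) ≤ ((T1 k + HahnSeries.C a) ^ j).order := by
    rw [HahnSeries.order_pow]
    exact nsmul_nonneg (base_ea_order_nonneg a) j
  omega

theorem red_ea_coeff_zero (a : k) {f : RatFunc k} (hf : IsReducedRatFunc p k f) :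
    ∀ z : ℤ, z < 0 → (p:ℤ) ∣ z → (ea a f).coeff z = 0 := by
  rw [red_iff] at hf
  induction hf using Submodule.span_induction with
  | mem g hg =>
    intro z hz hdvd
    rcases hg with ⟨a', j, hj, hpj, rfl⟩ | ⟨j, hj, hpj, rfl⟩
    · exact ea_coeff_pole_zero a a' j hj hpj z hz hdvd
    · exact ea_coeff_mon_zero a j z hz
  | zero => intro z hz hdvd; simp
  | add x y hx hy ihx ihy =>
    intro z hz hdvd
    rw [map_add, HahnSeries.coeff_add, ihx z hz hdvd, ihy z hz hdvd, add_zero]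
  | smul c x hx ih =>
    intro z hz hdvd
    rw [ea_smul, HahnSeries.coeff_smul, ih z hz hdvd, smul_zero]

theorem einf_base_ne (a' : k) : (Tm1 k - HahnSeries.C a') ≠ 0 := by
  intro h
  have h1 : (Tm1 k - HahnSeries.C a').coeff (-1) = 1 := by
    rw [HahnSeries.coeff_sub, Tm1, HahnSeries.coeff_single_same, HahnSeries.C_apply,
      HahnSeries.coeff_single_of_ne (by norm_num)]
    simp
  rw [h] at h1
  simp at h1

theorem einf_base_order (a' : k) : (Tm1 k - HahnSeries.C a').order = -1 := by
  apply le_antisymm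
  · apply HahnSeries.order_le_of_coeff_ne_zero
    rw [HahnSeries.coeff_sub, Tm1, HahnSeries.coeff_single_same, HahnSeries.C_apply,
      HahnSeries.coeff_single_of_ne (by norm_num)]
    simp
  · apply order_ge (einf_base_ne a') (-1)
    intro z hz
    rw [HahnSeries.coeff_sub, Tm1, HahnSeries.coeff_single_of_ne (by omega), HahnSeries.C_apply,
      HahnSeries.coeff_single_of_ne (by omega)]
    simp

theorem einf_coeff_pole_zero (a' : k) (j : ℕ) (hj : 0 < j) (z : ℤ) (hz : z ≤ 0) :
    (einf k (((RatFunc.X - RatFunc.C a') ^ j)⁻¹)).coeff z = 0 := by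
  rw [map_inv₀, map_pow, einf_X_sub_C]
  have hv := einf_base_ne a'
  have hpow : (Tm1 k - HahnSeries.C a') ^ j ≠ 0 := pow_ne_zero _ hv
  have hordpow : ((Tm1 k - HahnSeries.C a') ^ j).order = -(j:ℤ) := by
    rw [HahnSeries.order_pow, einf_base_order]
    simp
  have hinvord : (((Tm1 k - HahnSeries.C a') ^ j)⁻¹).order = (j:ℤ) := by
    have h1 := HahnSeries.order_mul (inv_ne_zero hpow) hpow
    rw [inv_mul_cancel₀ hpow, HahnSeries.order_one, hordpow] at h1
    omega
  apply HahnSeries.coeff_eq_zero_of_lt_order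
  rw [hinvord]
  omega

theorem einf_coeff_mon_zero (j : ℕ) (hj : 0 < j) (hpj : ¬ p ∣ j) (z : ℤ) (hz : z ≤ 0)
    (hdvd : (p:ℤ) ∣ z) : (einf k (RatFunc.X ^ j)).coeff z = 0 := by
  rw [map_pow, einf_X, Tm1, HahnSeries.single_pow]
  apply HahnSeries.coeff_single_of_ne
  intro hzj
  apply hpj
  have hj' : (j : ℕ) • (-1:ℤ) = -(j:ℤ) := by simp
  rw [hj'] at hzj
  have : (p:ℤ) ∣ (j:ℤ) := by
    rw [← Int.dvd_neg, ← hzj]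
    exact hdvd
  exact_mod_cast this

theorem red_einf_coeff_zero {f : RatFunc k} (hf : IsReducedRatFunc p k f) :
    ∀ z : ℤ, z ≤ 0 → (p:ℤ) ∣ z → (einf k f).coeff z = 0 := by
  rw [red_iff] at hf
  induction hf using Submodule.span_induction with
  | mem g hg =>
    intro z hz hdvd
    rcases hg with ⟨a', j, hj, hpj, rfl⟩ | ⟨j, hj, hpj, rfl⟩
    · exact einf_coeff_pole_zero a' j hj z hz
    · exact einf_coeff_mon_zero j hj hpj z hz hdvd
  | zero => intro z hz hdvd; simp
  | add x y hx hy ihx ihy =>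
    intro z hz hdvd
    rw [map_add, HahnSeries.coeff_add, ihx z hz hdvd, ihy z hz hdvd, add_zero]
  | smul c x hx ih =>
    intro z hz hdvd
    rw [einf_smul, HahnSeries.coeff_smul, ih z hz hdvd, smul_zero]

/-! ### uniqueness -/

theorem einfPoly_apply' (Q : k[X]) : einfPoly k Q = Polynomial.aeval (Tm1 k) Q := rfl

theorem eaPoly_ne_zero (a : k) {Q : k[X]} (hQ : Q ≠ 0) : eaPoly a Q ≠ 0 := by
  intro h
  exact hQ (eaPoly_injective a (by rwa [map_zero]))

theorem einfPoly_ne_zero {Q : k[X]} (hQ : Q ≠ 0) : einfPoly k Q ≠ 0 := by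
  intro h
  exact hQ (einfPoly_injective (by rwa [map_zero]))

theorem eaPoly_order_zero (a : k) {Q : k[X]} (hQ : Q.eval a ≠ 0) : (eaPoly a Q).order = 0 := by
  have hQ0 : Q ≠ 0 := fun h => hQ (by simp [h])
  apply le_antisymm
  · apply HahnSeries.order_le_of_coeff_ne_zero
    rw [eaPoly_apply, aeval_T1_coeff]
    simpa [Polynomial.taylor_coeff_zero] using hQ
  · apply order_ge (eaPoly_ne_zero a hQ0) 0
    intro z hz
    rw [eaPoly_apply, aeval_T1_coeff, if_neg (by omega)]

theorem eaPoly_order_pos (a : k) {Q : k[X]} (hQ0 : Q ≠ 0) (hQ : Q.eval a = 0) :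
    1 ≤ (eaPoly a Q).order := by
  have hne := eaPoly_ne_zero a hQ0
  have h0 : (0:ℤ) ≤ (eaPoly a Q).order := by
    apply order_ge hne 0
    intro z hz
    rw [eaPoly_apply, aeval_T1_coeff, if_neg (by omega)]
  have hne0 : (eaPoly a Q).order ≠ 0 := by
    intro h
    apply HahnSeries.coeff_order_eq_zero.not.mpr hne
    rw [h, eaPoly_apply, aeval_T1_coeff]
    simp [Polynomial.taylor_coeff_zero, hQ]
  omega

theorem einfPoly_order {P : k[X]} (hP : P ≠ 0) : (einfPoly k P).order = -(P.natDegree : ℤ) := by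
  apply le_antisymm
  · apply HahnSeries.order_le_of_coeff_ne_zero
    rw [einfPoly_apply', aeval_Tm1_coeff, if_pos (by omega)]
    simpa using Polynomial.leadingCoeff_ne_zero.mpr hP
  · apply order_ge (einfPoly_ne_zero hP) _
    intro z hz
    rw [einfPoly_apply', aeval_Tm1_coeff]
    split_ifs with h
    · apply Polynomial.coeff_eq_zero_of_natDegree_lt
      omega
    · rfl

theorem ea_order_neg (a : k) {b : RatFunc k} (hb : b ≠ 0) (ha : Polynomial.eval a b.denom = 0) :
    (ea a b).order < 0 := by
  have hnum : b.num.eval a ≠ 0 := by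
    obtain ⟨u, v, huv⟩ := RatFunc.isCoprime_num_denom b
    intro h
    have h2 := congrArg (Polynomial.eval a) huv
    rw [Polynomial.eval_add, Polynomial.eval_mul, Polynomial.eval_mul, h, ha] at h2
    simp at h2
  have hrel : b * algebraMap k[X] (RatFunc k) b.denom = algebraMap k[X] (RatFunc k) b.num := by
    nth_rewrite 1 [← RatFunc.num_div_denom b]
    rw [div_mul_cancel₀ _ (RatFunc.algebraMap_ne_zero (RatFunc.denom_ne_zero b))]
  have hmap := congrArg (ea a) hrel
  rw [map_mul, ea_algebraMap, ea_algebraMap] at hmap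
  have hbne : ea a b ≠ 0 := by
    intro h
    exact hb ((map_eq_zero_iff _ (RingHom.injective (ea a))).mp h)
  have hdne : eaPoly a b.denom ≠ 0 := eaPoly_ne_zero a (RatFunc.denom_ne_zero b)
  have horder := HahnSeries.order_mul hbne hdne
  rw [hmap, eaPoly_order_zero a hnum] at horder
  have h1 := eaPoly_order_pos a (RatFunc.denom_ne_zero b) ha
  linarith [horder.symm]

theorem contra_embed {f b : RatFunc k} (e : RatFunc k →+* LaurentSeries k)
    (hred : ∀ z : ℤ, z < 0 → (p:ℤ) ∣ z → (e f).coeff z = 0)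
    (hfb : f = b ^ p - b) (hg : e b ≠ 0) (hor : (e b).order < 0) : False := by
  have hp2 : 2 ≤ (p:ℤ) := by exact_mod_cast hp.out.two_le
  set g := e b with hgdef
  set z0 : ℤ := (p:ℤ) * g.order with hz0def
  have hz0 : z0 < 0 := mul_neg_of_pos_of_neg (by omega) hor
  have hz0' : z0 < g.order := by nlinarith
  have hcoe : (g ^ p).coeff z0 = g.leadingCoeff ^ p := by
    have h1 := pow_coeff_order hg p
    rwa [show (p • g.order) = z0 by rw [hz0def]; simp [nsmul_eq_mul]] at h1
  have hc2 : g.coeff z0 = 0 := HahnSeries.coeff_eq_zero_of_lt_order hz0'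
  have hco := hred z0 hz0 ⟨g.order, rfl⟩
  rw [hfb, map_sub, map_pow, HahnSeries.coeff_sub, ← hgdef, hcoe, hc2, sub_zero] at hco
  exact (pow_ne_zero p (HahnSeries.leadingCoeff_ne_zero.mpr hg)) hco

theorem reduced_eq_zero [IsAlgClosed k] [CharP k p] {f b : RatFunc k}
    (hf : IsReducedRatFunc p k f) (hfb : f = b ^ p - b) : f = 0 := by
  by_cases hb0 : b = 0
  · rw [hfb, hb0, zero_pow hp.out.ne_zero, sub_zero]
  by_cases hd : b.denom.natDegree = 0
  · have h1 : b.denom = 1 := ((RatFunc.monic_denom b).natDegree_eq_zero).mp hd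
    have hb : b = algebraMap k[X] (RatFunc k) b.num := by
      conv_lhs => rw [← RatFunc.num_div_denom b]
      rw [h1, map_one, div_one]
    by_cases hnd : b.num.natDegree = 0
    · obtain ⟨c0, hc0⟩ := Polynomial.natDegree_eq_zero.mp hnd
      have hbC : b = RatFunc.C c0 := by rw [hb, ← hc0, RatFunc.algebraMap_C]
      have hfC : f = RatFunc.C (c0 ^ p - c0) := by rw [hfb, hbC, ← map_pow, ← map_sub]
      have h0 := red_einf_coeff_zero hf 0 le_rfl (dvd_zero _)
      rw [hfC, einf_C] at h0
      have hcc : c0 ^ p - c0 = 0 := by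
        rw [HahnSeries.C_apply, HahnSeries.coeff_single_same] at h0
        exact h0
      rw [hfC, hcc, map_zero]
    · exfalso
      apply contra_embed (einf k) (fun z hz hdvd => red_einf_coeff_zero hf z (le_of_lt hz) hdvd)
        hfb
      · intro h
        exact hb0 ((map_eq_zero_iff _ (RingHom.injective (einf k))).mp h)
      · rw [hb, einf_algebraMap, einfPoly_order (RatFunc.num_ne_zero hb0)]
        omega
  · exfalso
    have hdeg : b.denom.degree ≠ 0 := by
      rw [Polynomial.degree_eq_natDegree (RatFunc.denom_ne_zero b)]
      exact_mod_cast hd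
    obtain ⟨a, ha⟩ := IsAlgClosed.exists_root _ hdeg
    apply contra_embed (ea a) (red_ea_coeff_zero a hf) hfb
    · intro h
      exact hb0 ((map_eq_zero_iff _ (RingHom.injective (ea a))).mp h)
    · exact ea_order_neg a hb0 ha

/-! ### existence -/

section Exist
variable [IsAlgClosed k] [CharP k p]

theorem Sp_pole (a : k) : ∀ j : ℕ, 0 < j → ∀ c : k,
    ∃ f b : RatFunc k, IsReducedRatFunc p k f ∧
      c • ((RatFunc.X - RatFunc.C a) ^ j)⁻¹ = f + (b ^ p - b) := by
  intro j
  induction j using Nat.strong_induction_on with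
  | _ j ih =>
    intro hj c
    by_cases hpj : p ∣ j
    · obtain ⟨j', rfl⟩ := hpj
      have hj' : 0 < j' := Nat.pos_of_ne_zero (fun h => by subst h; simp at hj)
      have hlt : j' < p * j' := (Nat.lt_mul_iff_one_lt_left hj').mpr hp.out.one_lt
      obtain ⟨d, hd⟩ := IsAlgClosed.exists_pow_nat_eq c hp.out.pos
      obtain ⟨f, b, hf, hfb⟩ := ih j' hlt hj' d
      refine ⟨f, b + d • ((RatFunc.X - RatFunc.C a) ^ j')⁻¹, hf, ?_⟩
      haveI := charP_ratFunc (p := p) (k := k)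
      have hpow : (d • ((RatFunc.X - RatFunc.C a) ^ j')⁻¹) ^ p
          = c • ((RatFunc.X - RatFunc.C a) ^ (p * j'))⁻¹ := by
        rw [_root_.smul_pow, hd, inv_pow, ← pow_mul, mul_comm j' p]
      have hbu : (b + d • ((RatFunc.X - RatFunc.C a) ^ j')⁻¹) ^ p
          = b ^ p + (d • ((RatFunc.X - RatFunc.C a) ^ j')⁻¹) ^ p := add_pow_char _ _ _
      linear_combination -hpow - hbu + hfb
    · refine ⟨c • ((RatFunc.X - RatFunc.C a) ^ j)⁻¹, 0, ?_, by
        rw [zero_pow hp.out.ne_zero, sub_zero, add_zero]⟩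
      rw [red_iff]
      exact Submodule.smul_mem _ c (Submodule.subset_span
        (Set.mem_union_left _ ⟨a, j, hj, hpj, rfl⟩))

theorem Sp_mon : ∀ j : ℕ, 0 < j → ∀ c : k,
    ∃ f b : RatFunc k, IsReducedRatFunc p k f ∧
      c • (RatFunc.X ^ j) = f + (b ^ p - b) := by
  intro j
  induction j using Nat.strong_induction_on with
  | _ j ih =>
    intro hj c
    by_cases hpj : p ∣ j
    · obtain ⟨j', rfl⟩ := hpj
      have hj' : 0 < j' := Nat.pos_of_ne_zero (fun h => by subst h; simp at hj)
      have hlt : j' < p * j' := (Nat.lt_mul_iff_one_lt_left hj').mpr hp.out.one_lt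
      obtain ⟨d, hd⟩ := IsAlgClosed.exists_pow_nat_eq c hp.out.pos
      obtain ⟨f, b, hf, hfb⟩ := ih j' hlt hj' d
      refine ⟨f, b + d • (RatFunc.X ^ j'), hf, ?_⟩
      haveI := charP_ratFunc (p := p) (k := k)
      have hpow : (d • (RatFunc.X ^ j')) ^ p = c • (RatFunc.X ^ (p * j') : RatFunc k) := by
        rw [_root_.smul_pow, ← pow_mul, hd, mul_comm j' p]
      have hbu : (b + d • (RatFunc.X ^ j')) ^ p
          = b ^ p + (d • (RatFunc.X ^ j')) ^ p := add_pow_char _ _ _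
      linear_combination -hpow - hbu + hfb
    · refine ⟨c • (RatFunc.X ^ j), 0, ?_, by
        rw [zero_pow hp.out.ne_zero, sub_zero, add_zero]⟩
      rw [red_iff]
      exact Submodule.smul_mem _ c (Submodule.subset_span
        (Set.mem_union_right _ ⟨j, hj, hpj, rfl⟩))

theorem Sp_C (c : k) : ∃ f b : RatFunc k, IsReducedRatFunc p k f ∧
    RatFunc.C c = f + (b ^ p - b) := by
  have hlt1 : (Polynomial.X + Polynomial.C c : k[X]).degree
      < ((Polynomial.X : k[X]) ^ p).degree := by
    rw [Polynomial.degree_X_pow, Polynomial.degree_X_add_C]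
    exact_mod_cast hp.out.one_lt
  have hdeg : ((Polynomial.X : k[X]) ^ p - (Polynomial.X + Polynomial.C c)).degree
      = (p : WithBot ℕ) := by
    rw [Polynomial.degree_sub_eq_left_of_degree_lt hlt1, Polynomial.degree_X_pow]
  obtain ⟨d, hd⟩ := IsAlgClosed.exists_root ((Polynomial.X : k[X]) ^ p - (Polynomial.X + Polynomial.C c))
    (by rw [hdeg]; exact_mod_cast hp.out.ne_zero)
  have hd' : d ^ p - d = c := by
    have := hd
    simp only [Polynomial.IsRoot, Polynomial.eval_sub, Polynomial.eval_pow, Polynomial.eval_X,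
      Polynomial.eval_add, Polynomial.eval_C] at this
    linear_combination this
  refine ⟨0, RatFunc.C d, by rw [red_iff]; exact Submodule.zero_mem _, ?_⟩
  rw [zero_add, ← map_pow, ← map_sub, hd']

theorem Sp_add {g h : RatFunc k}
    (hg : ∃ f b : RatFunc k, IsReducedRatFunc p k f ∧ g = f + (b ^ p - b))
    (hh : ∃ f b : RatFunc k, IsReducedRatFunc p k f ∧ h = f + (b ^ p - b)) :
    ∃ f b : RatFunc k, IsReducedRatFunc p k f ∧ g + h = f + (b ^ p - b) := by
  obtain ⟨f1, b1, hf1, he1⟩ := hg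
  obtain ⟨f2, b2, hf2, he2⟩ := hh
  haveI := charP_ratFunc (p := p) (k := k)
  refine ⟨f1 + f2, b1 + b2, ?_, ?_⟩
  · rw [red_iff] at *
    exact Submodule.add_mem _ hf1 hf2
  · have hbu : (b1 + b2) ^ p = b1 ^ p + b2 ^ p := add_pow_char _ _ _
    linear_combination he1 + he2 - hbu

theorem Sp_poly (Q : k[X]) : ∃ f b : RatFunc k, IsReducedRatFunc p k f ∧
    algebraMap k[X] (RatFunc k) Q = f + (b ^ p - b) := by
  induction Q using Polynomial.induction_on' with
  | add f g hf hg => rw [map_add]; exact Sp_add hf hg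
  | monomial n c =>
    rw [← Polynomial.C_mul_X_pow_eq_monomial, map_mul, map_pow, RatFunc.algebraMap_C,
      RatFunc.algebraMap_X]
    rcases Nat.eq_zero_or_pos n with hn | hn
    · subst hn
      rw [pow_zero, mul_one]
      exact Sp_C c
    · have : RatFunc.C c * RatFunc.X ^ n = c • (RatFunc.X ^ n) := by
        rw [Algebra.smul_def, RatFunc.algebraMap_eq_C]
      rw [this]
      exact Sp_mon n hn c

theorem Sp_denom_one {g : RatFunc k} (hg : g.denom.natDegree = 0) :
    ∃ f b : RatFunc k, IsReducedRatFunc p k f ∧ g = f + (b ^ p - b) := by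
  have h1 : g.denom = 1 := ((RatFunc.monic_denom g).natDegree_eq_zero).mp hg
  have hb : g = algebraMap k[X] (RatFunc k) g.num := by
    conv_lhs => rw [← RatFunc.num_div_denom g]
    rw [h1, map_one, div_one]
  rw [hb]
  exact Sp_poly g.num

theorem Sp_all (g : RatFunc k) :
    ∃ f b : RatFunc k, IsReducedRatFunc p k f ∧ g = f + (b ^ p - b) := by
  suffices H : ∀ N : ℕ, ∀ g : RatFunc k, g.denom.natDegree ≤ N →
      ∃ f b : RatFunc k, IsReducedRatFunc p k f ∧ g = f + (b ^ p - b) from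
    H g.denom.natDegree g le_rfl
  intro N
  induction N with
  | zero => intro g hg; exact Sp_denom_one (Nat.le_zero.mp hg)
  | succ N ihN =>
    intro g hg
    by_cases h0 : g.denom.natDegree = 0
    · exact Sp_denom_one h0
    · have hdeg : g.denom.degree ≠ 0 := by
        rw [Polynomial.degree_eq_natDegree (RatFunc.denom_ne_zero g)]
        exact_mod_cast h0
      obtain ⟨a, ha⟩ := IsAlgClosed.exists_root _ hdeg
      set m := Polynomial.rootMultiplicity a g.denom with hmdef
      have hmpos : 0 < m := (Polynomial.rootMultiplicity_pos (RatFunc.denom_ne_zero g)).mpr ha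
      obtain ⟨E, hE, hndvd⟩ := Polynomial.exists_eq_pow_rootMultiplicity_mul_and_not_dvd
        g.denom (RatFunc.denom_ne_zero g) a
      have hEa : E.eval a ≠ 0 := fun h => hndvd (Polynomial.dvd_iff_isRoot.mpr h)
      have hE0 : E ≠ 0 := fun h => RatFunc.denom_ne_zero g (by rw [hE, h, mul_zero])
      set c := g.num.eval a / E.eval a with hcdef
      have hroot : (g.num - Polynomial.C c * E).IsRoot a := by
        simp only [Polynomial.IsRoot, Polynomial.eval_sub, Polynomial.eval_mul, Polynomial.eval_C]
        rw [hcdef, div_mul_cancel₀ _ hEa]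
        ring
      obtain ⟨N', hN'⟩ := Polynomial.dvd_iff_isRoot.mpr hroot
      set D' : k[X] := (Polynomial.X - Polynomial.C a) ^ (m - 1) * E with hD'def
      have hXa0 : (Polynomial.X - Polynomial.C a : k[X]) ≠ 0 := Polynomial.X_sub_C_ne_zero a
      have hD'0 : D' ≠ 0 := mul_ne_zero (pow_ne_zero _ hXa0) hE0
      have hpm : (Polynomial.X - Polynomial.C a : k[X]) ^ m
          = (Polynomial.X - Polynomial.C a) * (Polynomial.X - Polynomial.C a) ^ (m - 1) := by
        conv_lhs => rw [show m = 1 + (m - 1) by omega]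
        rw [pow_add, pow_one]
      -- main identity
      have hgid : g = algebraMap k[X] (RatFunc k) N' / algebraMap k[X] (RatFunc k) D'
          + c • ((RatFunc.X - RatFunc.C a) ^ m)⁻¹ := by
        have hXa : RatFunc.X - RatFunc.C a
            = algebraMap k[X] (RatFunc k) (Polynomial.X - Polynomial.C a) := by
          rw [map_sub, RatFunc.algebraMap_X, RatFunc.algebraMap_C]
        have hsmul : c • ((RatFunc.X - RatFunc.C a) ^ m)⁻¹
            = algebraMap k[X] (RatFunc k) (Polynomial.C c)
              / algebraMap k[X] (RatFunc k) ((Polynomial.X - Polynomial.C a) ^ m) := by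
          rw [hXa, ← map_pow, Algebra.smul_def, RatFunc.algebraMap_eq_C, ← RatFunc.algebraMap_C,
            div_eq_mul_inv]
        have hne1 : algebraMap k[X] (RatFunc k) D' ≠ 0 := RatFunc.algebraMap_ne_zero hD'0
        have hne2 : algebraMap k[X] (RatFunc k) ((Polynomial.X - Polynomial.C a) ^ m) ≠ 0 :=
          RatFunc.algebraMap_ne_zero (pow_ne_zero _ hXa0)
        have hne3 : algebraMap k[X] (RatFunc k) g.denom ≠ 0 :=
          RatFunc.algebraMap_ne_zero (RatFunc.denom_ne_zero g)
        rw [hsmul]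
        conv_lhs => rw [← RatFunc.num_div_denom g]
        rw [div_add_div _ _ hne1 hne2, div_eq_div_iff hne3 (mul_ne_zero hne1 hne2)]
        simp only [← map_mul, ← map_add]
        apply congrArg
        have hnum : g.num = (Polynomial.X - Polynomial.C a) * N' + Polynomial.C c * E := by
          rw [← hN']; ring
        rw [hnum, hE, hD'def, hpm]
        ring
      -- degree bound
      have hdvd : (algebraMap k[X] (RatFunc k) N' / algebraMap k[X] (RatFunc k) D').denom ∣ D' :=
        (RatFunc.denom_dvd hD'0).mpr ⟨N', rfl⟩
      have hdenbound : (algebraMap k[X] (RatFunc k) N' / algebraMap k[X] (RatFunc k) D').denom.natDegree ≤ N := by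
        have h2 : (algebraMap k[X] (RatFunc k) N' / algebraMap k[X] (RatFunc k) D').denom.natDegree
            ≤ D'.natDegree := Polynomial.natDegree_le_of_dvd hdvd hD'0
        have h3 : D'.natDegree = (m - 1) + E.natDegree := by
          rw [hD'def, Polynomial.natDegree_mul (pow_ne_zero _ hXa0) hE0,
            Polynomial.natDegree_pow, Polynomial.natDegree_X_sub_C, mul_one]
        have h4 : g.denom.natDegree = m + E.natDegree := by
          rw [hE, Polynomial.natDegree_mul (pow_ne_zero _ hXa0) hE0,
            Polynomial.natDegree_pow, Polynomial.natDegree_X_sub_C, mul_one]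
        omega
      obtain ⟨f1, b1, hf1, he1⟩ := ihN _ hdenbound
      obtain ⟨f2, b2, hf2, he2⟩ := Sp_pole (p := p) a m hmpos c
      rw [hgid, he1, he2]
      exact Sp_add ⟨f1, b1, hf1, rfl⟩ ⟨f2, b2, hf2, rfl⟩

end Exist


/-! ### Witt vector layer -/

section WittLayer
open WittVector

variable {p : ℕ} [hp : Fact p.Prime]

open WittVector Finset

variable {p : ℕ} [hp : Fact p.Prime]

local notation "W" => WittVector p

section CommRing
variable {R : Type*} [CommRing R]

theorem vlow (m : ℕ) (y : W R) : ∀ j < m, ((verschiebung (p := p))^[m] y).coeff j = 0 := by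
  induction m generalizing y with
  | zero => omega
  | succ m ih =>
    intro j hj
    rw [Function.iterate_succ_apply']
    cases j with
    | zero => exact verschiebung_coeff_zero _
    | succ j =>
      rw [verschiebung_coeff_succ]
      exact ih y j (by omega)

theorem exists_iterV (m : ℕ) (x : W R) (h : ∀ j < m, x.coeff j = 0) :
    ∃ u, x = (verschiebung (p := p))^[m] u := by
  induction m generalizing x with
  | zero => exact ⟨x, rfl⟩
  | succ m ih =>
    have hxz : x = verschiebung (WittVector.mk p fun i => x.coeff (i + 1)) := by
      apply WittVector.ext
      intro n
      cases n with
      | zero => rw [verschiebung_coeff_zero]; exact h 0 (by omega)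
      | succ n => rw [verschiebung_coeff_succ, WittVector.coeff_mk]
    obtain ⟨u, hu⟩ := ih (WittVector.mk p fun i => x.coeff (i + 1))
      (fun j hj => by rw [WittVector.coeff_mk]; exact h (j + 1) (by omega))
    exact ⟨u, by rw [hxz, hu]; exact (Function.iterate_succ_apply' _ m u).symm⟩

theorem ghost0 (x : W R) : ghostComponent 0 x = x.coeff 0 := by
  rw [ghostComponent_apply, aeval_wittPolynomial]
  simp

theorem coeff0_sub (x y : W R) : (x - y).coeff 0 = x.coeff 0 - y.coeff 0 := by
  rw [← ghost0, ← ghost0, ← ghost0, map_sub]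

theorem iterV_sub (m : ℕ) (x y : W R) :
    (verschiebung (p := p))^[m] (x - y)
      = (verschiebung (p := p))^[m] x - (verschiebung (p := p))^[m] y := by
  induction m generalizing x y with
  | zero => rfl
  | succ m ih =>
    rw [Function.iterate_succ_apply', Function.iterate_succ_apply',
      Function.iterate_succ_apply', ih, map_sub]

theorem sub_low_zero (m : ℕ) (x y : W R) (h : ∀ j < m, x.coeff j = y.coeff j) :
    ∀ j < m, (x - y).coeff j = 0 := by
  have hker : WittVector.truncate (p := p) m (x - y) = 0 := by
    rw [map_sub, sub_eq_zero]
    apply TruncatedWittVector.ext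
    intro i
    rw [WittVector.coeff_truncate, WittVector.coeff_truncate]
    exact h i i.isLt
  exact (WittVector.mem_ker_truncate m (x - y)).mp hker

theorem add_iterV_coeff_lt (m : ℕ) (x y : W R) (j : ℕ) (hj : j < m) :
    (x + (verschiebung (p := p))^[m] y).coeff j = x.coeff j := by
  have h0 : WittVector.truncate (p := p) m ((verschiebung (p := p))^[m] y) = 0 := by
    apply TruncatedWittVector.ext
    intro i
    rw [WittVector.coeff_truncate, vlow m y i i.isLt, TruncatedWittVector.coeff_zero]
  have ht : WittVector.truncate (p := p) m (x + (verschiebung (p := p))^[m] y)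
      = WittVector.truncate m x := by rw [map_add, h0, add_zero]
  have := congrArg (TruncatedWittVector.coeff (⟨j, hj⟩ : Fin m)) ht
  rwa [WittVector.coeff_truncate, WittVector.coeff_truncate] at this

end CommRing

section Universal

local notation "A" => MvPolynomial (ℕ ⊕ ℕ) ℤ
local notation "AQ" => MvPolynomial (ℕ ⊕ ℕ) ℚ

theorem add_iterV_coeff_rat (m : ℕ) (x y : WittVector p AQ) :
    (x + (verschiebung (p := p))^[m] y).coeff m = x.coeff m + y.coeff 0 := by
  have hgh : ∀ z : WittVector p AQ, ghostComponent (p := p) m z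
      = ∑ i ∈ range (m + 1), (p : AQ) ^ i * z.coeff i ^ p ^ (m - i) := by
    intro z
    rw [ghostComponent_apply, aeval_wittPolynomial]
  have hV : ghostComponent (p := p) m ((verschiebung (p := p))^[m] y) = (p : AQ) ^ m * y.coeff 0 := by
    clear hgh
    induction m with
    | zero => simpa using ghost0 y
    | succ m ih =>
      rw [Function.iterate_succ_apply', ghostComponent_verschiebung, ih]
      ring
  have key : ghostComponent (p := p) m (x + (verschiebung (p := p))^[m] y)
      = ghostComponent m x + (p : AQ) ^ m * y.coeff 0 := by
    rw [map_add, hV]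
  rw [hgh, hgh] at key
  rw [Finset.sum_range_succ, Finset.sum_range_succ] at key
  have hlow : ∑ i ∈ range m, (p : AQ) ^ i * (x + (verschiebung (p := p))^[m] y).coeff i ^ p ^ (m - i)
      = ∑ i ∈ range m, (p : AQ) ^ i * x.coeff i ^ p ^ (m - i) := by
    apply Finset.sum_congr rfl
    intro i hi
    rw [add_iterV_coeff_lt m x y i (Finset.mem_range.mp hi)]
  rw [hlow] at key
  have hp0 : ((p : AQ) ^ m) ≠ 0 := by
    apply pow_ne_zero
    exact_mod_cast (Nat.Prime.ne_zero hp.out : (p : ℕ) ≠ 0)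
  have := key
  simp only [Nat.sub_self, pow_zero, pow_one] at this
  rw [add_assoc] at this
  have h2 := add_left_cancel this
  rw [← mul_add] at h2
  exact mul_left_cancel₀ hp0 h2

theorem map_iterV {R S : Type*} [CommRing R] [CommRing S] (f : R →+* S) (m : ℕ) (x : WittVector p R) :
    WittVector.map f ((verschiebung (p := p))^[m] x) = (verschiebung (p := p))^[m] (WittVector.map f x) := by
  induction m generalizing x with
  | zero => rfl
  | succ m ih =>
    rw [Function.iterate_succ_apply', Function.iterate_succ_apply', map_verschiebung, ih]

theorem add_iterV_coeff_int (m : ℕ) (x y : WittVector p A) :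
    (x + (verschiebung (p := p))^[m] y).coeff m = x.coeff m + y.coeff 0 := by
  apply MvPolynomial.map_injective (Int.castRingHom ℚ) Int.cast_injective
  have := add_iterV_coeff_rat (p := p) m
    (WittVector.map (MvPolynomial.map (Int.castRingHom ℚ)) x)
    (WittVector.map (MvPolynomial.map (Int.castRingHom ℚ)) y)
  rw [← map_iterV, ← map_add (WittVector.map (MvPolynomial.map (Int.castRingHom ℚ)))] at this
  rw [map_add]
  rw [WittVector.map_coeff, WittVector.map_coeff, WittVector.map_coeff] at this
  rw [this]

theorem add_iterV_coeff {R : Type*} [CommRing R] (m : ℕ) (x y : WittVector p R) :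
    (x + (verschiebung (p := p))^[m] y).coeff m = x.coeff m + y.coeff 0 := by
  let ψ : A →+* R := (MvPolynomial.aeval (R := ℤ) (Sum.elim x.coeff y.coeff)).toRingHom
  have hx : WittVector.map ψ (WittVector.mk p fun i => MvPolynomial.X (Sum.inl i)) = x := by
    apply WittVector.ext; intro n
    rw [WittVector.map_coeff, WittVector.coeff_mk]
    simp [ψ]
  have hy : WittVector.map ψ (WittVector.mk p fun i => MvPolynomial.X (Sum.inr i)) = y := by
    apply WittVector.ext; intro n
    rw [WittVector.map_coeff, WittVector.coeff_mk]
    simp [ψ]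
  have := congrArg ψ (add_iterV_coeff_int (p := p) m
    (WittVector.mk p fun i => MvPolynomial.X (Sum.inl i))
    (WittVector.mk p fun i => MvPolynomial.X (Sum.inr i)))
  rw [map_add, ← WittVector.map_coeff ψ, ← WittVector.map_coeff ψ, ← WittVector.map_coeff ψ,
    map_add (WittVector.map ψ), map_iterV, hx, hy] at this
  exact this

end Universal

section Sub
variable {R : Type*} [CommRing R]

theorem sub_coeff_eq (m : ℕ) (x y : WittVector p R) (h : ∀ j < m, x.coeff j = y.coeff j) :
    (x - y).coeff m = x.coeff m - y.coeff m := by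
  obtain ⟨u, hu⟩ := exists_iterV m (x - y) (sub_low_zero m x y h)
  have h1 : x = y + (verschiebung (p := p))^[m] u := by rw [← hu]; ring
  have h2 : x.coeff m = y.coeff m + u.coeff 0 := by
    conv_lhs => rw [h1]
    exact add_iterV_coeff m y u
  have h3 : (x - y).coeff m = u.coeff 0 := by
    rw [hu]
    simpa using iterate_verschiebung_coeff u m 0
  rw [h3, h2]; ring

end Sub



section CharPW
variable {R : Type*} [CommRing R] [CharP R p]

theorem frob_iterV (m : ℕ) (x : WittVector p R) :
    WittVector.frobenius ((verschiebung (p := p))^[m] x)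
      = (verschiebung (p := p))^[m] (WittVector.frobenius x) := by
  induction m generalizing x with
  | zero => rfl
  | succ m ih =>
    rw [Function.iterate_succ_apply', Function.iterate_succ_apply',
      ← WittVector.verschiebung_frobenius_comm ((verschiebung (p := p))^[m] x), ih]

theorem iterV_zero_fix (m : ℕ) : (verschiebung (p := p))^[m] (0 : WittVector p R) = 0 :=
  Function.iterate_fixed (map_zero _) m

theorem iterV_neg (m : ℕ) (x : WittVector p R) :
    (verschiebung (p := p))^[m] (-x) = -((verschiebung (p := p))^[m] x) := by
  have h := iterV_sub (p := p) m 0 x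
  rw [zero_sub, iterV_zero_fix, zero_sub] at h
  exact h

theorem coeff0_neg (x : WittVector p R) : (-x).coeff 0 = -(x.coeff 0) := by
  rw [← ghost0, ← ghost0, map_neg]

end CharPW

theorem exists_red_full {k : Type} [Field k] [IsAlgClosed k] [CharP k p]
    (m : ℕ) (G : WittVector p (RatFunc k)) :
    ∃ F B : WittVector p (RatFunc k),
      G = F + (WittVector.frobenius B - B) ∧ ∀ i < m, IsReducedRatFunc p k (F.coeff i) := by
  haveI := charP_ratFunc (p := p) (k := k)
  induction m with
  | zero => exact ⟨G, 0, by simp, by omega⟩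
  | succ m ih =>
    obtain ⟨F, B, hGF, hred⟩ := ih
    obtain ⟨f, b, hf, hfb⟩ := Sp_all (p := p) (F.coeff m)
    set w : WittVector p (RatFunc k) := WittVector.mk p (fun j => if j = 0 then b else 0) with hw
    set d : WittVector p (RatFunc k) := WittVector.frobenius w - w with hdd
    have hd0 : d.coeff 0 = b ^ p - b := by
      rw [hdd, coeff0_sub, WittVector.coeff_frobenius_charP, hw, WittVector.coeff_mk]
      simp
    have hfw : WittVector.frobenius ((verschiebung (p := p))^[m] w)
        - (verschiebung (p := p))^[m] w = (verschiebung (p := p))^[m] d := by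
      rw [frob_iterV, hdd, iterV_sub]
    refine ⟨F - (verschiebung (p := p))^[m] d, B + (verschiebung (p := p))^[m] w, ?_, ?_⟩
    · have hrearr : F - (verschiebung (p := p))^[m] d
          + (WittVector.frobenius B + WittVector.frobenius ((verschiebung (p := p))^[m] w)
            - (B + (verschiebung (p := p))^[m] w))
          = F + (WittVector.frobenius B - B)
            + ((WittVector.frobenius ((verschiebung (p := p))^[m] w)
              - (verschiebung (p := p))^[m] w) - (verschiebung (p := p))^[m] d) := by ring
      rw [map_add, hrearr, hfw, sub_self, add_zero]
      exact hGF
    · intro i hi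
      rcases Nat.lt_succ_iff_lt_or_eq.mp hi with hi' | rfl
      · have hc : (F - (verschiebung (p := p))^[m] d).coeff i = F.coeff i := by
          rw [sub_eq_add_neg, ← iterV_neg, add_iterV_coeff_lt m F (-d) i hi']
        rw [hc]; exact hred i hi'
      · have hc : (F - (verschiebung (p := p))^[i] d).coeff i = f := by
          rw [sub_eq_add_neg, ← iterV_neg, add_iterV_coeff i F (-d), coeff0_neg, hd0, hfb]
          ring
        rw [hc]; exact hf

theorem asw_truncate {k : Type} [Field k] [CharP k p] (n : ℕ)
    (B : WittVector p (RatFunc k)) :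
    aswIsogeny p n k (WittVector.truncate n B)
      = WittVector.truncate n (WittVector.frobenius B - B) := by
  haveI := charP_ratFunc (p := p) (k := k)
  unfold aswIsogeny
  rw [map_sub]
  congr 1
  apply TruncatedWittVector.ext
  intro i
  rw [TruncatedWittVector.coeff_mk, WittVector.coeff_truncate, WittVector.coeff_truncate,
    WittVector.coeff_frobenius_charP]

theorem out_truncate {k : Type} [Field k] {n : ℕ}
    (x : TruncatedWittVector p n (RatFunc k)) : WittVector.truncate n x.out = x := by
  apply TruncatedWittVector.ext
  intro i
  rw [WittVector.coeff_truncate, TruncatedWittVector.coeff_out]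

end WittLayer


end ReducedWitt

/-- **Existence and uniqueness of reduced representatives of Artin–Schreier–Witt classes**
(see §2.2 of the paper): let `k` be an algebraically closed field of characteristic
`p > 0`. Every length-`n` truncated Witt vector `G` over `k(x)` is congruent modulo
`℘(W_n(k(x)))` to a Witt vector all of whose components are reduced, and this reduced
representative is unique: two reduced Witt vectors in the same Artin–Schreier–Witt class
are equal. -/
theorem reduced_witt_representative
    (p : ℕ) [Fact p.Prime] (k : Type) [Field k] [IsAlgClosed k] [CharP k p]
    (n : ℕ) (hn : 1 ≤ n) :
    (∀ G : TruncatedWittVector p n (RatFunc k),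
      ∃ F : TruncatedWittVector p n (RatFunc k),
        (∀ i : Fin n, IsReducedRatFunc p k (TruncatedWittVector.coeff i F)) ∧
        ∃ B : TruncatedWittVector p n (RatFunc k), G = F + aswIsogeny p n k B) ∧
    (∀ F' F'' : TruncatedWittVector p n (RatFunc k),
      (∀ i : Fin n, IsReducedRatFunc p k (TruncatedWittVector.coeff i F')) →
      (∀ i : Fin n, IsReducedRatFunc p k (TruncatedWittVector.coeff i F'')) →
      (∃ B : TruncatedWittVector p n (RatFunc k), F' - F'' = aswIsogeny p n k B) →
      F' = F'') := by
  haveI := ReducedWitt.charP_ratFunc (p := p) (k := k)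
  constructor
  · intro G
    obtain ⟨G', rfl⟩ := WittVector.truncate_surjective p n (RatFunc k) G
    obtain ⟨F, B, hFB, hred⟩ := ReducedWitt.exists_red_full (p := p) n G'
    refine ⟨WittVector.truncate n F, ?_, WittVector.truncate n B, ?_⟩
    · intro i
      rw [WittVector.coeff_truncate]
      exact hred i i.isLt
    · rw [ReducedWitt.asw_truncate, ← map_add, ← hFB]
  · intro F' F'' hF' hF'' hex
    obtain ⟨Bn, hBn⟩ := hex
    obtain ⟨B, rfl⟩ := WittVector.truncate_surjective p n (RatFunc k) Bn
    have hker : (F'.out - F''.out - (WittVector.frobenius B - B))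
        ∈ RingHom.ker (WittVector.truncate (p := p) n) := by
      rw [RingHom.mem_ker, map_sub, map_sub, ReducedWitt.out_truncate, ReducedWitt.out_truncate,
        ← ReducedWitt.asw_truncate, ← hBn, sub_self]
    have hEker := (WittVector.mem_ker_truncate n _).mp hker
    have main : ∀ i, i < n →
        F'.out.coeff i = F''.out.coeff i ∧ (B.coeff i) ^ p = B.coeff i := by
      intro i
      induction i using Nat.strong_induction_on with
      | _ i ihi =>
        intro hin
        have hagree : ∀ j < i, F'.out.coeff j = F''.out.coeff j :=
          fun j hj => (ihi j hj (hj.trans hin)).1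
        have hBfix : ∀ j < i, (WittVector.frobenius B).coeff j = B.coeff j := fun j hj => by
          rw [WittVector.coeff_frobenius_charP]
          exact (ihi j hj (hj.trans hin)).2
        have h1 := ReducedWitt.sub_coeff_eq i F'.out F''.out hagree
        have h2 : (WittVector.frobenius B - B).coeff i = (B.coeff i) ^ p - B.coeff i := by
          rw [ReducedWitt.sub_coeff_eq i _ _ hBfix, WittVector.coeff_frobenius_charP]
        have hlow1 := ReducedWitt.sub_low_zero i F'.out F''.out hagree
        have hlow2 := ReducedWitt.sub_low_zero i _ _ hBfix
        have h3 := ReducedWitt.sub_coeff_eq i (F'.out - F''.out) (WittVector.frobenius B - B)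
          (fun j hj => by rw [hlow1 j hj, hlow2 j hj])
        have h4 := hEker i hin
        rw [h3, h1, h2] at h4
        have h5 : F'.out.coeff i - F''.out.coeff i = (B.coeff i) ^ p - B.coeff i :=
          sub_eq_zero.mp h4
        have hredXY : IsReducedRatFunc p k (F'.out.coeff i - F''.out.coeff i) := by
          rw [ReducedWitt.red_iff]
          have ha := hF' ⟨i, hin⟩
          have hb := hF'' ⟨i, hin⟩
          rw [ReducedWitt.red_iff] at ha hb
          rw [show F'.out.coeff i = TruncatedWittVector.coeff ⟨i, hin⟩ F' from
              TruncatedWittVector.coeff_out F' ⟨i, hin⟩,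
            show F''.out.coeff i = TruncatedWittVector.coeff ⟨i, hin⟩ F'' from
              TruncatedWittVector.coeff_out F'' ⟨i, hin⟩]
          exact Submodule.sub_mem _ ha hb
        have h6 : F'.out.coeff i - F''.out.coeff i = 0 :=
          ReducedWitt.reduced_eq_zero hredXY h5
        refine ⟨sub_eq_zero.mp h6, ?_⟩
        rw [h6] at h5
        exact sub_eq_zero.mp h5.symm
    apply TruncatedWittVector.ext
    intro i
    rw [← TruncatedWittVector.coeff_out F' i, ← TruncatedWittVector.coeff_out F'' i]
    exact (main i i.isLt).1
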